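/- Let κ₁, …, κₙ be nested convex families in ℝ^d with n ≥ 1, suppose ⋂_{i=1}^{n} κᵢ(t₀) is nonempty for some t₀ ≥ 0, let t* = inf { t ≥ 0 | ⋂_{i=1}^{n} κᵢ(t) ≠ ∅ }, and let x* be the lexicographically least point of ⋂_{i=1}^{n} κᵢ(t*). Then there exists a nonempty subset B ⊆ {1,…,n} with |B| ≤ 2d + 1 such that, setting t*_B = inf { t ≥ 0 | ⋂_{i∈B} κᵢ(t) ≠ ∅ }, one has t*_B = t* and the lexicographically least point of ⋂_{i∈B} κᵢ(t*_B) equals x*. -/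

import Mathlib

/-- A nested convex family in `ℝ^d`. -/
def IsNestedConvexFamily (d : ℕ) (κ : ℝ → Set (EuclideanSpace ℝ (Fin d))) : Prop :=
  (∀ t : ℝ, 0 ≤ t → IsCompact (κ t)) ∧
  (∀ t : ℝ, 0 ≤ t → Convex ℝ (κ t)) ∧
  (∀ a b : ℝ, 0 ≤ a → a ≤ b → κ a ⊆ κ b) ∧
  (∀ t : ℝ, 0 ≤ t → κ t = ⋂ t' ∈ Set.Ioi t, κ t')

/-- Lexicographic order on points of `ℝ^d`, by coordinates. -/
def LexLE {d : ℕ} (x y : EuclideanSpace ℝ (Fin d)) : Prop :=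
  x = y ∨ ∃ i : Fin d, x i < y i ∧ ∀ j : Fin d, j < i → x j = y j

/-- `x` is the lexicographically least point of the set `s`. -/
def IsLexLeast {d : ℕ} (s : Set (EuclideanSpace ℝ (Fin d)))
    (x : EuclideanSpace ℝ (Fin d)) : Prop :=
  x ∈ s ∧ ∀ y ∈ s, LexLE x y

/-- Strict lexicographic order. -/
def SLexLT {d : ℕ} (x y : EuclideanSpace ℝ (Fin d)) : Prop :=
  ∃ i : Fin d, x i < y i ∧ ∀ j : Fin d, j < i → x j = y j

lemma lexle_or_slex {d : ℕ} (x y : EuclideanSpace ℝ (Fin d)) :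
    LexLE x y ∨ SLexLT y x := by
  classical
  by_cases hxy : x = y
  · exact Or.inl (Or.inl hxy)
  · have hD : (Finset.univ.filter (fun i : Fin d => x i ≠ y i)).Nonempty := by
      by_contra h
      rw [Finset.not_nonempty_iff_eq_empty] at h
      apply hxy
      ext i
      by_contra hi
      have hm : i ∈ Finset.univ.filter (fun i : Fin d => x i ≠ y i) := by simp [hi]
      simp [h] at hm
    set i := hD.choose with hidef
    have hmin : ∀ j : Fin d, j < (Finset.univ.filter (fun i : Fin d => x i ≠ y i)).min' hD →
        x j = y j := by
      intro j hj
      by_contra hne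
      exact absurd (Finset.min'_le _ j (by simp [hne])) (not_le.mpr hj)
    set i0 := (Finset.univ.filter (fun i : Fin d => x i ≠ y i)).min' hD with hi0
    have hne0 : x i0 ≠ y i0 := by
      have := Finset.min'_mem (Finset.univ.filter (fun i : Fin d => x i ≠ y i)) hD
      simpa using this
    rcases lt_or_gt_of_ne hne0 with h | h
    · exact Or.inl (Or.inr ⟨i0, h, hmin⟩)
    · exact Or.inr ⟨i0, h, fun j hj => (hmin j hj).symm⟩

lemma lexle_slex_false {d : ℕ} {x y : EuclideanSpace ℝ (Fin d)}
    (h1 : LexLE x y) (h2 : SLexLT y x) : False := by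
  rcases h1 with rfl | ⟨i, hi, hagree⟩
  · obtain ⟨j, hj, -⟩ := h2
    exact lt_irrefl _ hj
  · obtain ⟨j, hj, hagree'⟩ := h2
    rcases lt_trichotomy i j with h | rfl | h
    · exact absurd (hagree' i h) (ne_of_gt hi)
    · exact lt_irrefl _ (hi.trans hj)
    · exact absurd (hagree j h) (ne_of_gt hj)

lemma slex_convex {d : ℕ} (x : EuclideanSpace ℝ (Fin d)) :
    Convex ℝ {y : EuclideanSpace ℝ (Fin d) | SLexLT y x} := by
  intro y hy z hz a b ha hb hab
  rcases eq_or_lt_of_le ha with rfl | ha'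
  · have hb1 : b = 1 := by linarith
    subst hb1; simpa using hz
  rcases eq_or_lt_of_le hb with rfl | hb'
  · have ha1 : a = 1 := by linarith
    subst ha1; simpa using hy
  obtain ⟨i, hyi, hy'⟩ := hy
  obtain ⟨i', hzi, hz'⟩ := hz
  refine ⟨min i i', ?_, ?_⟩
  · have happ : (a • y + b • z) (min i i') = a * y (min i i') + b * z (min i i') := by
      simp [PiLp.add_apply, PiLp.smul_apply, smul_eq_mul]
    rw [happ]
    have hyk : y (min i i') ≤ x (min i i') := by
      rcases lt_or_eq_of_le (min_le_left i i') with h | h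
      · exact le_of_eq (hy' _ h)
      · rw [h]; exact le_of_lt hyi
    have hzk : z (min i i') ≤ x (min i i') := by
      rcases lt_or_eq_of_le (min_le_right i i') with h | h
      · exact le_of_eq (hz' _ h)
      · rw [h]; exact le_of_lt hzi
    have hstrict : y (min i i') < x (min i i') ∨ z (min i i') < x (min i i') := by
      rcases min_choice i i' with h | h
      · rw [h]; exact Or.inl hyi
      · rw [h]; exact Or.inr hzi
    have hx1 : a * x (min i i') + b * x (min i i') = x (min i i') := by
      rw [← add_mul, hab, one_mul]
    rcases hstrict with h | h
    · have h1 := mul_lt_mul_of_pos_left h ha'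
      have h2 := mul_le_mul_of_nonneg_left hzk hb
      linarith
    · have h1 := mul_le_mul_of_nonneg_left hyk ha
      have h2 := mul_lt_mul_of_pos_left h hb'
      linarith
  · intro j hj
    have happ : (a • y + b • z) j = a * y j + b * z j := by
      simp [PiLp.add_apply, PiLp.smul_apply, smul_eq_mul]
    rw [happ, hy' j (lt_of_lt_of_le hj (min_le_left i i')),
      hz' j (lt_of_lt_of_le hj (min_le_right i i')), ← add_mul, hab, one_mul]

lemma helly_empty {d : ℕ} {ι : Type*} {F : ι → Set (EuclideanSpace ℝ (Fin d))} {s : Finset ι}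
    (hconv : ∀ i ∈ s, Convex ℝ (F i)) (hempty : ¬ (⋂ i ∈ s, F i).Nonempty) :
    ∃ I : Finset ι, I ⊆ s ∧ I.card ≤ d + 1 ∧ ¬ (⋂ i ∈ I, F i).Nonempty := by
  by_contra h
  push_neg at h
  exact hempty (Convex.helly_theorem' hconv (fun I hI hc =>
    h I hI (by simpa [finrank_euclideanSpace_fin] using hc)))

theorem basis_general {d n : ℕ} (hn : 1 ≤ n)
    (κ : Fin n → ℝ → Set (EuclideanSpace ℝ (Fin d)))
    (hκ : ∀ i, IsNestedConvexFamily d (κ i))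
    (t₀ : ℝ) (ht₀ : 0 ≤ t₀) (hne : (⋂ i : Fin n, κ i t₀).Nonempty)
    (tStar : ℝ)
    (htStar : tStar = sInf {t : ℝ | 0 ≤ t ∧ (⋂ i : Fin n, κ i t).Nonempty})
    (xStar : EuclideanSpace ℝ (Fin d))
    (hxStar : IsLexLeast (⋂ i : Fin n, κ i tStar) xStar) :
    ∃ B : Finset (Fin n), B.Nonempty ∧ B.card ≤ 2 * d + 1 ∧
      sInf {t : ℝ | 0 ≤ t ∧ (⋂ i ∈ B, κ i t).Nonempty} = tStar ∧
      IsLexLeast (⋂ i ∈ B, κ i (sInf {t : ℝ | 0 ≤ t ∧ (⋂ i ∈ B, κ i t).Nonempty}))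
        xStar := by
  classical
  have hbddFull : BddBelow {t : ℝ | 0 ≤ t ∧ (⋂ i : Fin n, κ i t).Nonempty} :=
    ⟨0, fun t ht => ht.1⟩
  have ht0 : 0 ≤ tStar := htStar ▸ le_csInf ⟨t₀, ht₀, hne⟩ (fun t ht => ht.1)
  have hxmem : ∀ i, xStar ∈ κ i tStar := fun i => Set.mem_iInter.mp hxStar.1 i
  have hxmemB : ∀ B : Finset (Fin n), xStar ∈ ⋂ i ∈ B, κ i tStar :=
    fun B => Set.mem_iInter₂.mpr fun i _ => hxmem i
  have htSB : ∀ B : Finset (Fin n),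
      tStar ∈ {t : ℝ | 0 ≤ t ∧ (⋂ i ∈ B, κ i t).Nonempty} :=
    fun B => ⟨ht0, ⟨xStar, hxmemB B⟩⟩
  have hbddB : ∀ B : Finset (Fin n),
      BddBelow {t : ℝ | 0 ≤ t ∧ (⋂ i ∈ B, κ i t).Nonempty} :=
    fun B => ⟨0, fun t ht => ht.1⟩
  have hSBle : ∀ B : Finset (Fin n),
      sInf {t : ℝ | 0 ≤ t ∧ (⋂ i ∈ B, κ i t).Nonempty} ≤ tStar :=
    fun B => csInf_le (hbddB B) (htSB B)
  have hSB0 : ∀ B : Finset (Fin n),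
      0 ≤ sInf {t : ℝ | 0 ≤ t ∧ (⋂ i ∈ B, κ i t).Nonempty} :=
    fun B => le_csInf ⟨tStar, htSB B⟩ (fun t ht => ht.1)
  -- Step A : a small subfamily capturing tStar
  have hA : ∃ B : Finset (Fin n), B.card ≤ d + 1 ∧
      tStar ≤ sInf {t : ℝ | 0 ≤ t ∧ (⋂ i ∈ B, κ i t).Nonempty} := by
    by_contra hcon
    push_neg at hcon
    set P := (Finset.univ : Finset (Fin n)).powerset.filter (fun B => B.card ≤ d + 1) with hP
    have hPne : P.Nonempty := ⟨∅, by simp [hP]⟩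
    obtain ⟨B₀, hB₀P, hB₀max⟩ := P.exists_max_image
      (fun B => sInf {t : ℝ | 0 ≤ t ∧ (⋂ i ∈ B, κ i t).Nonempty}) hPne
    set m := sInf {t : ℝ | 0 ≤ t ∧ (⋂ i ∈ B₀, κ i t).Nonempty} with hm
    have hmlt : m < tStar := hcon B₀ (Finset.mem_filter.mp hB₀P).2
    have hm0 : 0 ≤ m := hSB0 B₀
    set t := (m + tStar) / 2 with htdef
    have htpos : 0 ≤ t := by rw [htdef]; linarith
    have htlt : t < tStar := by rw [htdef]; linarith
    have htm : m < t := by rw [htdef]; linarith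
    have hful : (⋂ i ∈ (Finset.univ : Finset (Fin n)), κ i t).Nonempty := by
      apply Convex.helly_theorem' (𝕜 := ℝ)
      · exact fun i _ => (hκ i).2.1 t htpos
      · intro I hIss hIcard
        rw [finrank_euclideanSpace_fin] at hIcard
        have hIP : I ∈ P := Finset.mem_filter.mpr ⟨Finset.mem_powerset.mpr hIss, hIcard⟩
        have h2 : sInf {t : ℝ | 0 ≤ t ∧ (⋂ i ∈ I, κ i t).Nonempty} < t :=
          lt_of_le_of_lt (hB₀max I hIP) htm
        obtain ⟨s, hsS, hst⟩ := exists_lt_of_csInf_lt ⟨tStar, htSB I⟩ h2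
        obtain ⟨w, hw⟩ := hsS.2
        exact ⟨w, Set.mem_iInter₂.mpr fun i hi =>
          (hκ i).2.2.1 s t hsS.1 hst.le (Set.mem_iInter₂.mp hw i hi)⟩
    have hful' : (⋂ i : Fin n, κ i t).Nonempty := by
      rwa [show (⋂ i ∈ (Finset.univ : Finset (Fin n)), κ i t) = ⋂ i : Fin n, κ i t
        by simp] at hful
    have : tStar ≤ t := htStar ▸ csInf_le hbddFull ⟨htpos, hful'⟩
    linarith
  -- upgrade to a nonempty subfamily
  have hB1 : ∃ B : Finset (Fin n), B.Nonempty ∧ B.card ≤ d + 1 ∧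
      tStar ≤ sInf {t : ℝ | 0 ≤ t ∧ (⋂ i ∈ B, κ i t).Nonempty} := by
    obtain ⟨B, hBcard, hBle⟩ := hA
    rcases B.eq_empty_or_nonempty with rfl | hBne
    · refine ⟨{⟨0, hn⟩}, Finset.singleton_nonempty _, by simp, ?_⟩
      have h0 : sInf {t : ℝ | 0 ≤ t ∧ (⋂ i ∈ (∅ : Finset (Fin n)), κ i t).Nonempty} ≤ 0 :=
        csInf_le (hbddB ∅) ⟨le_refl 0, ⟨0, by simp⟩⟩
      have hts0 : tStar = 0 := le_antisymm (hBle.trans h0) ht0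
      rw [hts0]
      exact hSB0 _
    · exact ⟨B, hBne, hBcard, hBle⟩
  -- Step B : a small subfamily capturing the lex-least point
  have hB2 : ∃ B : Finset (Fin n), B.card ≤ d ∧
      ∀ y ∈ (⋂ i ∈ B, κ i tStar), ¬ SLexLT y xStar := by
    set F : Option (Fin n) → Set (EuclideanSpace ℝ (Fin d)) :=
      fun o => o.elim {y | SLexLT y xStar} (fun i => κ i tStar) with hF
    have hconv : ∀ o ∈ (Finset.univ : Finset (Option (Fin n))), Convex ℝ (F o) := by
      intro o _
      cases o with
      | none => exact slex_convex xStar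
      | some i => exact (hκ i).2.1 tStar ht0
    have hempty : ¬ (⋂ o ∈ (Finset.univ : Finset (Option (Fin n))), F o).Nonempty := by
      rintro ⟨y, hy⟩
      have h1 : SLexLT y xStar := Set.mem_iInter₂.mp hy none (Finset.mem_univ _)
      have h2 : y ∈ ⋂ i : Fin n, κ i tStar :=
        Set.mem_iInter.mpr fun i => Set.mem_iInter₂.mp hy (some i) (Finset.mem_univ _)
      exact lexle_slex_false (hxStar.2 y h2) h1
    obtain ⟨I, -, hIcard, hIempty⟩ := helly_empty hconv hempty
    have hnone : none ∈ I := by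
      by_contra hni
      apply hIempty
      refine ⟨xStar, Set.mem_iInter₂.mpr fun o ho => ?_⟩
      cases o with
      | none => exact absurd ho hni
      | some i => exact hxmem i
    refine ⟨Finset.univ.filter (fun i => some i ∈ I), ?_, ?_⟩
    · have him : (Finset.univ.filter (fun i : Fin n => some i ∈ I)).image some ⊆
          I.erase none := by
        intro o ho
        simp only [Finset.mem_image, Finset.mem_filter] at ho
        obtain ⟨i, ⟨-, hiI⟩, rfl⟩ := ho
        exact Finset.mem_erase.mpr ⟨Option.some_ne_none i, hiI⟩
      have h1 : (Finset.univ.filter (fun i : Fin n => some i ∈ I)).card =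
          ((Finset.univ.filter (fun i : Fin n => some i ∈ I)).image some).card :=
        (Finset.card_image_of_injective _ (Option.some_injective _)).symm
      have h2 := Finset.card_le_card him
      have h3 : (I.erase none).card = I.card - 1 := Finset.card_erase_of_mem hnone
      omega
    · intro y hy hsl
      apply hIempty
      refine ⟨y, Set.mem_iInter₂.mpr fun o ho => ?_⟩
      cases o with
      | none => exact hsl
      | some i =>
        exact Set.mem_iInter₂.mp hy i (Finset.mem_filter.mpr ⟨Finset.mem_univ _, ho⟩)
  -- Assemble
  obtain ⟨B₁, hB₁ne, hB₁card, hB₁inf⟩ := hB1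
  obtain ⟨B₂, hB₂card, hB₂lex⟩ := hB2
  have hsub1 : ∀ t : ℝ, (⋂ i ∈ B₁ ∪ B₂, κ i t) ⊆ ⋂ i ∈ B₁, κ i t :=
    fun t y hy => Set.mem_iInter₂.mpr fun i hi =>
      Set.mem_iInter₂.mp hy i (Finset.mem_union_left _ hi)
  have hsub2 : ∀ t : ℝ, (⋂ i ∈ B₁ ∪ B₂, κ i t) ⊆ ⋂ i ∈ B₂, κ i t :=
    fun t y hy => Set.mem_iInter₂.mpr fun i hi =>
      Set.mem_iInter₂.mp hy i (Finset.mem_union_right _ hi)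
  have hinf : sInf {t : ℝ | 0 ≤ t ∧ (⋂ i ∈ B₁ ∪ B₂, κ i t).Nonempty} = tStar := by
    apply le_antisymm (hSBle _)
    refine hB₁inf.trans (csInf_le_csInf (hbddB B₁) ⟨tStar, htSB _⟩ ?_)
    intro t ht
    exact ⟨ht.1, ht.2.mono (hsub1 t)⟩
  refine ⟨B₁ ∪ B₂, hB₁ne.mono Finset.subset_union_left,
    (Finset.card_union_le _ _).trans (by omega), hinf, ?_⟩
  rw [hinf]
  exact ⟨hxmemB _, fun y hy =>
    (lexle_or_slex xStar y).resolve_right (hB₂lex y (hsub2 tStar hy))⟩
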